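/- Let m ≥ 1 and let (Δ_l)_{l∈[m]} be a cyclic sequence of Δ-matrices satisfying the reverse domino condition with Δ₁ ∈ G₂ = {[[0,1],[0,1]], [[1,0],[1,0]], [[0,0],[1,1]], [[1,1],[0,0]]}. Then every Δ_l lies in G₂, and the number of indices l ∈ [m] with Δ_l ∈ {[[0,0],[1,1]], [[1,1],[0,0]]} is congruent to m modulo 2; in particular this number is odd if m is odd and even if m is even. -/

import Mathlib

open Matrix

noncomputable section

/-- A Δ-matrix: a `2 × 2` matrix with entries in `{0,1}` whose entries sum to an
even number. -/
def IsDelta (D : Matrix (Fin 2) (Fin 2) ℕ) : Prop :=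
  (∀ i j, D i j ≤ 1) ∧ Even (D 0 0 + D 0 1 + D 1 0 + D 1 1)

/-- The second group of Δ-matrices. -/
def G2 : Set (Matrix (Fin 2) (Fin 2) ℕ) :=
  {!![0,1;0,1], !![1,0;1,0], !![0,0;1,1], !![1,1;0,0]}

lemma g2_sum {D : Matrix (Fin 2) (Fin 2) ℕ} (hD : D ∈ G2) :
    D 0 0 + D 1 1 = 1 ∧ D 0 1 + D 1 0 = 1 := by
  simp only [G2, Set.mem_insert_iff, Set.mem_singleton_iff] at hD
  rcases hD with h|h|h|h <;> subst h <;> norm_num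

lemma mem_G2_of {D : Matrix (Fin 2) (Fin 2) ℕ} (hD : IsDelta D)
    (h : D 0 0 + D 1 1 = 1) : D ∈ G2 := by
  obtain ⟨hb, he⟩ := hD
  have h00 := hb 0 0; have h01 := hb 0 1; have h10 := hb 1 0; have h11 := hb 1 1
  rw [Matrix.eta_fin_two D]
  simp only [G2, Set.mem_insert_iff, Set.mem_singleton_iff]
  rw [Nat.even_iff] at he
  rcases Nat.le_one_iff_eq_zero_or_eq_one.mp h00 with h00|h00 <;>
  rcases Nat.le_one_iff_eq_zero_or_eq_one.mp h01 with h01|h01 <;>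
  rcases Nat.le_one_iff_eq_zero_or_eq_one.mp h10 with h10|h10 <;>
  rcases Nat.le_one_iff_eq_zero_or_eq_one.mp h11 with h11|h11 <;>
    rw [h00, h01, h10, h11] <;> first
      | (exfalso; omega)
      | simp

theorem stmt14 (m : ℕ) [NeZero m] (hm : 1 ≤ m)
    (Δ : Fin m → Matrix (Fin 2) (Fin 2) ℕ)
    (hΔ : ∀ l, IsDelta (Δ l))
    -- cyclic reverse domino condition
    (hrev : ∀ l, Δ (l + 1) 0 0 = Δ l 0 1 ∧ Δ (l + 1) 1 1 = Δ l 1 0)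
    (h0 : Δ 0 ∈ G2) :
    (∀ l, Δ l ∈ G2) ∧
    Set.ncard {l : Fin m | Δ l = !![0,0;1,1] ∨ Δ l = !![1,1;0,0]} % 2 = m % 2 := by
  classical
  have step : ∀ l : Fin m, Δ l ∈ G2 → Δ (l + 1) ∈ G2 := by
    intro l hl
    exact mem_G2_of (hΔ _) (by rw [(hrev l).1, (hrev l).2]; exact (g2_sum hl).2)
  have hall : ∀ l : Fin m, Δ l ∈ G2 := by
    open Fin.NatCast in
    have key : ∀ n : ℕ, Δ (n : Fin m) ∈ G2 := by
      intro n
      induction n with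
      | zero => simpa using h0
      | succ k ih => rw [Nat.cast_succ]; exact step _ ih
    intro l
    have := key l.val
    rwa [Fin.cast_val_eq_self] at this
  refine ⟨hall, ?_⟩
  set P : Fin m → Prop := fun l => Δ l = !![0,0;1,1] ∨ Δ l = !![1,1;0,0] with hP
  have key : ∀ l : Fin m,
      ((Δ (l + 1) 0 0 : ZMod 2) + (Δ l 0 0 : ZMod 2)) = if P l then 0 else 1 := by
    intro l
    have h1 := (hrev l).1
    have hl := hall l
    simp only [G2, Set.mem_insert_iff, Set.mem_singleton_iff] at hl
    have ne1 : ((!![0,1;0,1] : Matrix (Fin 2) (Fin 2) ℕ) = !![0,0;1,1]) = False := by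
      simp only [eq_iff_iff, iff_false]; intro hh; simpa using congrFun (congrFun hh 0) 1
    have ne2 : ((!![0,1;0,1] : Matrix (Fin 2) (Fin 2) ℕ) = !![1,1;0,0]) = False := by
      simp only [eq_iff_iff, iff_false]; intro hh; simpa using congrFun (congrFun hh 0) 0
    have ne3 : ((!![1,0;1,0] : Matrix (Fin 2) (Fin 2) ℕ) = !![0,0;1,1]) = False := by
      simp only [eq_iff_iff, iff_false]; intro hh; simpa using congrFun (congrFun hh 0) 0
    have ne4 : ((!![1,0;1,0] : Matrix (Fin 2) (Fin 2) ℕ) = !![1,1;0,0]) = False := by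
      simp only [eq_iff_iff, iff_false]; intro hh; simpa using congrFun (congrFun hh 0) 1
    rcases hl with h|h|h|h <;> rw [h1] <;>
      simp [hP, h, ne1, ne2, ne3, ne4] <;> decide
  have sum0 : ∑ l : Fin m, ((Δ (l + 1) 0 0 : ZMod 2) + (Δ l 0 0 : ZMod 2)) = 0 := by
    rw [Finset.sum_add_distrib]
    have he : ∑ l : Fin m, (Δ (l + 1) 0 0 : ZMod 2) = ∑ l : Fin m, (Δ l 0 0 : ZMod 2) :=
      Fintype.sum_equiv (Equiv.addRight 1) _ _ (fun l => rfl)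
    rw [he, CharTwo.add_self_eq_zero]
  have sumN : ∑ l : Fin m, (if P l then (0 : ZMod 2) else 1)
      = ((Finset.univ.filter fun l => ¬ P l).card : ZMod 2) := by
    rw [Finset.sum_ite]; simp
  have hcard0 : ((Finset.univ.filter fun l => ¬ P l).card : ZMod 2) = 0 := by
    rw [← sumN, ← Finset.sum_congr rfl fun l _ => key l, sum0]
  have hdvd : 2 ∣ (Finset.univ.filter fun l => ¬ P l).card := by
    rwa [ZMod.natCast_eq_zero_iff] at hcard0
  have hsplit : (Finset.univ.filter P).card + (Finset.univ.filter fun l => ¬ P l).card = m := by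
    rw [Finset.card_filter_add_card_filter_not]
    simp
  have hn : {l : Fin m | P l}.ncard = (Finset.univ.filter P).card := by
    rw [Set.ncard_eq_toFinset_card']
    simp [Set.toFinset_setOf]
  show Set.ncard {l : Fin m | P l} % 2 = m % 2
  rw [hn]
  omega
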